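/- Fix s > 0 and define g_s : ℝ → ℝ by g_s(d) = s·sign(d) if 0 < |d| < 1/2, g_s(d) = −s·sign(d) if 1/2 < |d| ≤ 1, and g_s(0) = 0. Let k ≥ 1, N = 3k, and let o : Fin N → ℝ be opinions taking exactly three values v₁ < v₂ < v₃, each attained by exactly k agents, with 0 < v₂−v₁ < 1/2, 0 < v₃−v₂ < 1/2, and 1/2 < v₃−v₁ < 1. Then o is a fixed point of the tent opinion vector field on ℝ^N, i.e. F(o)ᵢ = Σ_{j≠i} g_s(o_j − o_i) = 0 for every agent i. -/

import Mathlib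

/-- The tent pair-interaction force: attraction of magnitude `s` for opinion
differences below `1/2`, repulsion above `1/2`, zero at equal opinions. -/
noncomputable def tentForce (s d : ℝ) : ℝ :=
  if 0 < |d| ∧ |d| < 1/2 then s * Real.sign d
  else if 1/2 < |d| ∧ |d| ≤ 1 then -(s * Real.sign d)
  else 0

lemma tentForce_zero (s : ℝ) : tentForce s 0 = 0 := by
  simp [tentForce]

lemma tentForce_pos_small (s d : ℝ) (h0 : 0 < d) (h : d < 1/2) :
    tentForce s d = s := by
  rw [tentForce, if_pos ⟨by rwa [abs_of_pos h0], by rwa [abs_of_pos h0]⟩,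
    Real.sign_of_pos h0, mul_one]

lemma tentForce_neg_small (s d : ℝ) (h0 : d < 0) (h : -d < 1/2) :
    tentForce s d = -s := by
  rw [tentForce, if_pos ⟨by rw [abs_of_neg h0]; linarith, by rwa [abs_of_neg h0]⟩,
    Real.sign_of_neg h0, mul_neg_one]

lemma tentForce_pos_big (s d : ℝ) (h0 : 1/2 < d) (h : d ≤ 1) :
    tentForce s d = -s := by
  have hd : 0 < d := by linarith
  rw [tentForce, if_neg (by rw [abs_of_pos hd]; intro ⟨_, h2⟩; linarith),
    if_pos ⟨by rwa [abs_of_pos hd], by rwa [abs_of_pos hd]⟩,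
    Real.sign_of_pos hd, mul_one]

lemma tentForce_neg_big (s d : ℝ) (h0 : 1/2 < -d) (h : -d ≤ 1) :
    tentForce s d = s := by
  have hd : d < 0 := by linarith
  rw [tentForce, if_neg (by rw [abs_of_neg hd]; intro ⟨_, h2⟩; linarith),
    if_pos ⟨by rwa [abs_of_neg hd], by rwa [abs_of_neg hd]⟩,
    Real.sign_of_neg hd, mul_neg_one, neg_neg]

/-- Corollary: in a fully connected population of `N = 3k` agents whose
opinions take exactly three values `v₁ < v₂ < v₃`, each attained by exactly
`k` agents, with consecutive gaps in `(0, 1/2)` and outer gap in `(1/2, 1)`,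
the opinion profile is a fixed point of the tent opinion vector field. -/
theorem tent_fixed_point_3k (s : ℝ) (hs : 0 < s) (k : ℕ) (hk : 1 ≤ k)
    (o : Fin (3 * k) → ℝ) (v1 v2 v3 : ℝ)
    (hv12 : v1 < v2) (hv23 : v2 < v3)
    (hval : ∀ i, o i = v1 ∨ o i = v2 ∨ o i = v3)
    (hc1 : (Finset.univ.filter fun i => o i = v1).card = k)
    (hc2 : (Finset.univ.filter fun i => o i = v2).card = k)
    (hc3 : (Finset.univ.filter fun i => o i = v3).card = k)
    (hg1 : 0 < v2 - v1) (hg1' : v2 - v1 < 1/2)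
    (hg2 : 0 < v3 - v2) (hg2' : v3 - v2 < 1/2)
    (hg3 : 1/2 < v3 - v1) (hg3' : v3 - v1 < 1) :
    ∀ i : Fin (3 * k), ∑ j ∈ Finset.univ.erase i, tentForce s (o j - o i) = 0 := by
  intro i
  have h12 : v1 ≠ v2 := ne_of_lt hv12
  have h13 : v1 ≠ v3 := ne_of_lt (hv12.trans hv23)
  have h23 : v2 ≠ v3 := ne_of_lt hv23
  set c1 := tentForce s (v1 - o i) with hc1d
  set c2 := tentForce s (v2 - o i) with hc2d
  set c3 := tentForce s (v3 - o i) with hc3d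
  have key : ∀ j : Fin (3 * k), tentForce s (o j - o i) =
      (if o j = v1 then c1 else 0) + (if o j = v2 then c2 else 0) +
      (if o j = v3 then c3 else 0) := by
    intro j
    rcases hval j with h | h | h <;>
      simp [h, h12, h13, h23, h12.symm, h13.symm, h23.symm] <;> rfl
  have hsum : ∑ j ∈ Finset.univ.erase i, tentForce s (o j - o i) =
      ∑ j : Fin (3 * k), tentForce s (o j - o i) := by
    apply Finset.sum_erase
    simp [tentForce_zero]
  rw [hsum]
  have hsplit : ∑ j : Fin (3 * k), tentForce s (o j - o i) =
      (k : ℝ) * c1 + (k : ℝ) * c2 + (k : ℝ) * c3 := by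
    calc ∑ j : Fin (3 * k), tentForce s (o j - o i)
        = ∑ j : Fin (3 * k), ((if o j = v1 then c1 else 0) +
            (if o j = v2 then c2 else 0) + (if o j = v3 then c3 else 0)) :=
          Finset.sum_congr rfl fun j _ => key j
      _ = (∑ j : Fin (3 * k), if o j = v1 then c1 else 0) +
            (∑ j : Fin (3 * k), if o j = v2 then c2 else 0) +
            (∑ j : Fin (3 * k), if o j = v3 then c3 else 0) := by
          rw [Finset.sum_add_distrib, Finset.sum_add_distrib]
      _ = (k : ℝ) * c1 + (k : ℝ) * c2 + (k : ℝ) * c3 := by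
          rw [← Finset.sum_filter, ← Finset.sum_filter, ← Finset.sum_filter,
            Finset.sum_const, Finset.sum_const,
            Finset.sum_const, hc1, hc2, hc3, nsmul_eq_mul, nsmul_eq_mul, nsmul_eq_mul]
  rw [hsplit]
  rcases hval i with h | h | h
  · have e1 : c1 = 0 := by rw [hc1d, h, sub_self, tentForce_zero]
    have e2 : c2 = s := by rw [hc2d, h]; exact tentForce_pos_small s _ hg1 hg1'
    have e3 : c3 = -s := by
      rw [hc3d, h]; exact tentForce_pos_big s _ hg3 (le_of_lt hg3')
    rw [e1, e2, e3]; ring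
  · have e1 : c1 = -s := by
      rw [hc1d, h]; exact tentForce_neg_small s _ (by linarith) (by linarith)
    have e2 : c2 = 0 := by rw [hc2d, h, sub_self, tentForce_zero]
    have e3 : c3 = s := by rw [hc3d, h]; exact tentForce_pos_small s _ hg2 hg2'
    rw [e1, e2, e3]; ring
  · have e1 : c1 = s := by
      rw [hc1d, h]; exact tentForce_neg_big s _ (by linarith) (by linarith)
    have e2 : c2 = -s := by
      rw [hc2d, h]; exact tentForce_neg_small s _ (by linarith) (by linarith)
    have e3 : c3 = 0 := by rw [hc3d, h, sub_self, tentForce_zero]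
    rw [e1, e2, e3]; ring
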